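/- Let U : ℝ³ → M₂(ℂ) take values in SU(2) and be differentiable at a point x. Then the strain matrix 𝕃(x) ∈ M₃(ℝ) with entries 𝕃ᵢⱼ(x) = −Re Tr(Lᵢ(x)·Lⱼ(x)) is symmetric and positive semidefinite; indeed 𝕃ᵢⱼ(x) = Re Tr(Lᵢ(x)·Lⱼ(x)*), the real Frobenius inner product of Lᵢ(x) and Lⱼ(x). -/

import Mathlib

open Matrix

attribute [local instance] Matrix.frobeniusNormedAddCommGroup Matrix.frobeniusNormedSpace
attribute [local instance] Matrix.frobeniusNormedRing Matrix.frobeniusNormedAlgebra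

theorem stmt1 (U : (Fin 3 → ℝ) → Matrix (Fin 2) (Fin 2) ℂ)
    (hSU : ∀ y, (U y)ᴴ * U y = 1 ∧ (U y).det = 1)
    (x : Fin 3 → ℝ) (hU : DifferentiableAt ℝ U x)
    (L : Fin 3 → Matrix (Fin 2) (Fin 2) ℂ)
    (hL : ∀ i, L i = (U x)ᴴ * fderiv ℝ U x (Pi.single i 1))
    (𝕃 : Matrix (Fin 3) (Fin 3) ℝ)
    (h𝕃 : ∀ i j, 𝕃 i j = -((L i * L j).trace).re) :
    𝕃.IsSymm ∧ 𝕃.PosSemidef ∧ ∀ i j, 𝕃 i j = ((L i * (L j)ᴴ).trace).re := by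
  -- key unitarity derivative identity
  have key : ∀ v, (fderiv ℝ U x v)ᴴ * U x + (U x)ᴴ * fderiv ℝ U x v = 0 := by
    intro v
    have h1 : HasFDerivAt (fun y => star (U y)) _ x := hU.hasFDerivAt.star
    have h2 := h1.mul' hU.hasFDerivAt
    have h3 : HasFDerivAt (fun y => star (U y) * U y)
        (0 : (Fin 3 → ℝ) →L[ℝ] Matrix (Fin 2) (Fin 2) ℂ) x := by
      have : (fun y => star (U y) * U y) = fun _ => (1 : Matrix (Fin 2) (Fin 2) ℂ) := by
        funext y; exact (hSU y).1
      rw [this]; exact hasFDerivAt_const _ _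
    have h4 := h2.unique h3
    have := DFunLike.congr_fun h4 v
    change star (U x) * fderiv ℝ U x v + star (fderiv ℝ U x v) * U x = 0 at this
    simpa [star_eq_conjTranspose, add_comm] using this
  -- each L i is skew-Hermitian
  have hskew : ∀ i, (L i)ᴴ = -L i := by
    intro i
    have hk := key (Pi.single i 1)
    rw [hL i, conjTranspose_mul, conjTranspose_conjTranspose]
    exact eq_neg_of_add_eq_zero_left hk
  -- the Frobenius inner product formula
  have hIP : ∀ i j, 𝕃 i j = ((L i * (L j)ᴴ).trace).re := by
    intro i j
    rw [hskew j, h𝕃]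
    simp
  -- symmetry
  have hsym : 𝕃.IsSymm := by
    ext i j
    rw [transpose_apply, h𝕃, h𝕃, trace_mul_comm]
  refine ⟨hsym, ⟨?_, ?_⟩, hIP⟩
  · ext i j
    simp only [conjTranspose_apply, RCLike.star_def, starRingEnd_apply, star_trivial]
    exact congrFun (congrFun hsym i) j
  · intro z
    set S : Matrix (Fin 2) (Fin 2) ℂ := ∑ i, (z i : ℂ) • L i with hSdef
    have hS : S * Sᴴ = ∑ i, ∑ j, ((z i : ℂ) * (z j : ℂ)) • (L i * (L j)ᴴ) := by
      rw [hSdef, conjTranspose_sum, Finset.sum_mul]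
      refine Finset.sum_congr rfl fun i _ => ?_
      rw [Finset.mul_sum]
      refine Finset.sum_congr rfl fun j _ => ?_
      rw [conjTranspose_smul]
      simp [smul_mul_assoc, mul_smul_comm, smul_smul, Complex.star_def, Complex.conj_ofReal, mul_comm, ← Complex.ofReal_mul, Complex.coe_smul]
    have hTr : ((S * Sᴴ).trace).re = ∑ i, ∑ j, z i * z j * 𝕃 i j := by
      rw [hS]
      simp only [trace_sum, trace_smul, smul_eq_mul, Complex.re_sum]
      refine Finset.sum_congr rfl fun i _ => Finset.sum_congr rfl fun j _ => ?_
      rw [hIP i j, ← Complex.ofReal_mul, Complex.re_ofReal_mul]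
    have hQ : star z ⬝ᵥ 𝕃 *ᵥ z = ∑ i, ∑ j, z i * z j * 𝕃 i j := by
      simp only [dotProduct, mulVec, Pi.star_apply, star_trivial, Finset.mul_sum, dotProduct]
      exact Finset.sum_congr rfl fun i _ => Finset.sum_congr rfl fun j _ => by ring
    have hQ' : (z.sum fun i xi => z.sum fun j xj => star xi * 𝕃 i j * xj)
        = ∑ i, ∑ j, z i * z j * 𝕃 i j := by
      rw [Finsupp.sum_fintype _ _ (by simp)]
      refine Finset.sum_congr rfl fun i _ => ?_
      rw [Finsupp.sum_fintype _ _ (by simp)]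
      exact Finset.sum_congr rfl fun j _ => by simp only [star_trivial]; ring
    rw [hQ', ← hTr]
    have htr2 : (S * Sᴴ).trace = ∑ a, ∑ b, (Complex.normSq (S a b) : ℂ) := by
      simp only [trace, Matrix.diag, Matrix.mul_apply, conjTranspose_apply]
      exact Finset.sum_congr rfl fun a _ => Finset.sum_congr rfl fun b _ => by
        rw [Complex.star_def, Complex.mul_conj]
    rw [htr2]
    simp only [Complex.re_sum, Complex.ofReal_re]
    exact Finset.sum_nonneg fun a _ => Finset.sum_nonneg fun b _ => Complex.normSq_nonneg _
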